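/- For integers k ≥ 1, α > 2, s > 0, r > 0: ∫_r^∞ (1 − (1 − 1/(1 + v^α/s))^k) v dv = (r²/2)·Σ_{l=1}^k C(k,l)(−1)^{l+1} 𝔷(θ,α,l), where s = θ r^α and 𝔷(θ,α,l) = (2θ^l/(lα−2))·₂F₁(l, l−2/α; l−2/α+1; −θ). -/

import Mathlib

open Real MeasureTheory

noncomputable def hyp2F1 (a b c z : ℝ) : ℝ :=
  (Real.Gamma c / (Real.Gamma b * Real.Gamma (c - b))) *
    ∫ t in Set.Ioo (0 : ℝ) 1, t ^ (b - 1) * (1 - t) ^ (c - b - 1) * (1 - z * t) ^ (-a)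

/-- `𝔷(θ,α,l) = (2θ^l/(lα−2))·₂F₁(l, l−2/α; l−2/α+1; −θ)`. -/
noncomputable def zFunL (θ α : ℝ) (l : ℕ) : ℝ :=
  2 * θ ^ l / (l * α - 2) * hyp2F1 l (l - 2 / α) (l - 2 / α + 1) (-θ)

lemma binom_expand (k : ℕ) (x : ℝ) :
    1 - (1 - x) ^ k = ∑ l ∈ Finset.Icc 1 k, (k.choose l : ℝ) * (-1) ^ (l + 1) * x ^ l := by
  have h : (1 - x) ^ k = ∑ l ∈ Finset.range (k + 1), (-x) ^ l * (1:ℝ) ^ (k - l) * (k.choose l : ℝ) := by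
    rw [sub_eq_add_neg, add_comm, add_pow]
  have hr : Finset.range (k + 1) = insert 0 (Finset.Icc 1 k) := by
    ext m; simp only [Finset.mem_range, Finset.mem_insert, Finset.mem_Icc]; omega
  rw [h, hr, Finset.sum_insert (by simp)]
  have hc : ∀ l ∈ Finset.Icc 1 k, (k.choose l : ℝ) * (-1) ^ (l + 1) * x ^ l
      = -((-x) ^ l * (1:ℝ) ^ (k - l) * (k.choose l : ℝ)) := by
    intro l _; rw [neg_pow]; ring
  rw [Finset.sum_congr rfl hc, Finset.sum_neg_distrib]
  simp

section
open Set

lemma per_l (l : ℕ) (hl : 1 ≤ l) {α θ r s : ℝ}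
    (hα : 2 < α) (hθ : 0 < θ) (hr : 0 < r) (hs : s = θ * r ^ α) :
    IntegrableOn (fun v : ℝ => (1 / (1 + v ^ α / s)) ^ l * v) (Set.Ioi r) ∧
    (∫ v in Set.Ioi r, (1 / (1 + v ^ α / s)) ^ l * v)
      = r ^ 2 * θ ^ l / α *
        ∫ t in Set.Ioo (0:ℝ) 1, t ^ ((l:ℝ) - 2 / α - 1) * (1 + θ * t) ^ (-(l:ℝ)) := by
  have hα0 : (0:ℝ) < α := by linarith
  have hl1 : (1:ℝ) ≤ (l:ℝ) := by exact_mod_cast hl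
  have h2α : 2 / α < 1 := (div_lt_one hα0).mpr hα
  have hra : (0:ℝ) < r ^ α := Real.rpow_pos_of_pos hr α
  -- the substitution map
  set f : ℝ → ℝ := fun t => r * t ^ (-1 / α) with hf
  set f' : ℝ → ℝ := fun t => r * (-1 / α * t ^ (-1 / α - 1)) with hf'
  have hderiv : ∀ t ∈ Set.Ioo (0:ℝ) 1, HasDerivWithinAt f (f' t) (Set.Ioo 0 1) t := by
    intro t ht
    exact ((Real.hasDerivAt_rpow_const (Or.inl ht.1.ne')).const_mul r).hasDerivWithinAt
  have hcancel : ∀ t : ℝ, 0 < t → (t ^ (-1 / α)) ^ (-α) = t := by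
    intro t ht
    rw [← Real.rpow_mul ht.le, show -1 / α * -α = 1 by field_simp, Real.rpow_one]
  have hinj : Set.InjOn f (Set.Ioo 0 1) := by
    intro t1 h1 t2 h2 he
    have h' : t1 ^ (-1 / α) = t2 ^ (-1 / α) := mul_left_cancel₀ hr.ne' he
    calc t1 = (t1 ^ (-1 / α)) ^ (-α) := (hcancel t1 h1.1).symm
      _ = (t2 ^ (-1 / α)) ^ (-α) := by rw [h']
      _ = t2 := hcancel t2 h2.1
  have himg : f '' Set.Ioo 0 1 = Set.Ioi r := by
    ext v
    simp only [Set.mem_image, Set.mem_Ioo, Set.mem_Ioi]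
    constructor
    · rintro ⟨t, ⟨ht0, ht1⟩, rfl⟩
      have : 1 < t ^ (-1 / α) :=
        (Real.one_lt_rpow_iff_of_pos ht0).mpr (Or.inr ⟨ht1, div_neg_of_neg_of_pos (by norm_num) hα0⟩)
      calc r = r * 1 := (mul_one r).symm
        _ < f t := by exact mul_lt_mul_of_pos_left this hr
    · intro hv
      have hv0 : 0 < v := lt_trans hr hv
      refine ⟨(r / v) ^ α, ⟨Real.rpow_pos_of_pos (div_pos hr hv0) α,
        Real.rpow_lt_one (div_pos hr hv0).le ((div_lt_one hv0).mpr hv) hα0⟩, ?_⟩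
      show r * ((r / v) ^ α) ^ (-1 / α) = v
      rw [← Real.rpow_mul (div_pos hr hv0).le, show α * (-1 / α) = -1 by field_simp,
        Real.rpow_neg_one]
      field_simp
  -- pointwise identity on `Ioo 0 1`
  have hpt : ∀ t ∈ Set.Ioo (0:ℝ) 1,
      |f' t| * ((1 / (1 + (f t) ^ α / s)) ^ l * f t)
        = r ^ 2 * θ ^ l / α * (t ^ ((l:ℝ) - 2 / α - 1) * (1 + θ * t) ^ (-(l:ℝ))) := by
    rintro t ⟨ht0, ht1⟩
    have h1θt : (0:ℝ) < 1 + θ * t := by positivity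
    have e1 : (f t) ^ α = r ^ α / t := by
      show (r * t ^ (-1 / α)) ^ α = _
      rw [Real.mul_rpow hr.le (Real.rpow_nonneg ht0.le _), ← Real.rpow_mul ht0.le,
        show -1 / α * α = -1 by field_simp, Real.rpow_neg_one]
      ring
    have e2 : 1 + (f t) ^ α / s = (1 + θ * t) / (θ * t) := by
      rw [e1, hs]; field_simp; ring
    have e4 : |f' t| = r / α * t ^ (-1 / α - 1) := by
      show |r * (-1 / α * t ^ (-1 / α - 1))| = _
      rw [show r * (-1 / α * t ^ (-1 / α - 1)) = -(r / α * t ^ (-1 / α - 1)) by ring, abs_neg,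
        abs_of_nonneg (by positivity)]
    rw [e2, e4, one_div_div]
    show r / α * t ^ (-1 / α - 1) * ((θ * t / (1 + θ * t)) ^ l * (r * t ^ (-1 / α))) = _
    have e5 : (1 + θ * t) ^ (-(l:ℝ)) = ((1 + θ * t) ^ l)⁻¹ := by
      rw [Real.rpow_neg h1θt.le, Real.rpow_natCast]
    have e6 : t ^ ((l:ℝ) - 2 / α - 1) = t ^ l * (t ^ (-1 / α - 1) * t ^ (-1 / α)) := by
      rw [show (l:ℝ) - 2 / α - 1 = ↑l + (-1 / α - 1 + -1 / α) by ring,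
        Real.rpow_add ht0, Real.rpow_add ht0, Real.rpow_natCast]
    rw [e5, e6, div_pow, mul_pow]
    have hne : ((1 + θ * t) ^ l) ≠ 0 := pow_ne_zero _ h1θt.ne'
    field_simp
  -- integrability of the target function on Ioo 0 1
  have hInt : IntegrableOn (fun t : ℝ => t ^ ((l:ℝ) - 2 / α - 1) * (1 + θ * t) ^ (-(l:ℝ)))
      (Set.Ioo (0:ℝ) 1) := by
    have hb1 : (-1:ℝ) < (l:ℝ) - 2 / α - 1 := by linarith
    have h1 : IntegrableOn (fun t : ℝ => t ^ ((l:ℝ) - 2 / α - 1)) (Set.Ioo (0:ℝ) 1) :=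
      ((intervalIntegral.intervalIntegrable_rpow' hb1 (a := 0) (b := 1)).1).mono_set
        Set.Ioo_subset_Ioc_self
    refine h1.mono' (Measurable.aestronglyMeasurable (by fun_prop)) ?_
    rw [ae_restrict_iff' measurableSet_Ioo]
    refine ae_of_all _ fun t ht => ?_
    have ht0 := ht.1
    have h1θt : (0:ℝ) < 1 + θ * t := by positivity
    rw [Real.norm_eq_abs, abs_of_nonneg (by positivity)]
    have hle : (1 + θ * t) ^ (-(l:ℝ)) ≤ 1 :=
      Real.rpow_le_one_of_one_le_of_nonpos (le_add_of_nonneg_right (by positivity))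
        (neg_nonpos.mpr (Nat.cast_nonneg l))
    exact mul_le_of_le_one_right (Real.rpow_nonneg ht0.le _) hle
  constructor
  · rw [← himg, integrableOn_image_iff_integrableOn_abs_deriv_smul measurableSet_Ioo hderiv hinj]
    refine MeasureTheory.IntegrableOn.congr_fun (hInt.const_mul (r ^ 2 * θ ^ l / α)) ?_ measurableSet_Ioo
    intro t ht
    simp only [smul_eq_mul]
    exact (hpt t ht).symm
  · have hchg := integral_image_eq_integral_abs_deriv_smul measurableSet_Ioo hderiv hinj
      (fun v : ℝ => (1 / (1 + v ^ α / s)) ^ l * v)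
    rw [himg] at hchg
    rw [hchg,
      setIntegral_congr_fun measurableSet_Ioo
        (fun t ht => by simpa only [smul_eq_mul] using hpt t ht :
          Set.EqOn _ (fun t : ℝ => r ^ 2 * θ ^ l / α *
            (t ^ ((l:ℝ) - 2 / α - 1) * (1 + θ * t) ^ (-(l:ℝ)))) _),
      integral_const_mul]

end

lemma zfun_half (l : ℕ) (hl : 1 ≤ l) {α θ r : ℝ} (hα : 2 < α) (hθ : 0 < θ) (hr : 0 < r) :
    r ^ 2 / 2 * zFunL θ α l
      = r ^ 2 * θ ^ l / α *
          ∫ t in Set.Ioo (0:ℝ) 1, t ^ ((l:ℝ) - 2 / α - 1) * (1 + θ * t) ^ (-(l:ℝ)) := by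
  have hα0 : (0:ℝ) < α := by linarith
  have hl1 : (1:ℝ) ≤ (l:ℝ) := by exact_mod_cast hl
  have h2α : 2 / α < 1 := (div_lt_one hα0).mpr hα
  have hb : (0:ℝ) < (l:ℝ) - 2 / α := by linarith
  have hΓ : 0 < Real.Gamma ((l:ℝ) - 2 / α) := Real.Gamma_pos_of_pos hb
  unfold zFunL hyp2F1
  rw [show (l:ℝ) - 2 / α + 1 - ((l:ℝ) - 2 / α) = 1 by ring, Real.Gamma_one, mul_one,
    Real.Gamma_add_one hb.ne', mul_div_cancel_right₀ _ hΓ.ne']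
  simp only [show (1:ℝ) - 1 = 0 from by norm_num, Real.rpow_zero, mul_one, neg_mul,
    sub_neg_eq_add]
  have hlα : (l:ℝ) * α - 2 ≠ 0 := by nlinarith
  field_simp

/-- For integers `k ≥ 1`, `α > 2`, `θ > 0`, `r > 0`, with `s = θ r^α`:
`∫_r^∞ (1 − (1 − 1/(1 + v^α/s))^k) v dv = (r²/2)·Σ_{l=1}^k C(k,l)(−1)^{l+1} 𝔷(θ,α,l)`. -/
theorem interference_integral_kth_power (k : ℕ) (hk : 1 ≤ k) (α θ r s : ℝ)
    (hα : 2 < α) (hθ : 0 < θ) (hr : 0 < r) (hs : s = θ * r ^ α) :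
    (∫ v in Set.Ioi r, (1 - (1 - 1 / (1 + v ^ α / s)) ^ k) * v) =
      r ^ 2 / 2 *
        ∑ l ∈ Finset.Icc 1 k, (k.choose l : ℝ) * (-1) ^ (l + 1) * zFunL θ α l := by
  have hfun : (fun v : ℝ => (1 - (1 - 1 / (1 + v ^ α / s)) ^ k) * v)
      = fun v => ∑ l ∈ Finset.Icc 1 k,
          (k.choose l : ℝ) * (-1) ^ (l + 1) * ((1 / (1 + v ^ α / s)) ^ l * v) := by
    funext v
    rw [binom_expand, Finset.sum_mul]
    exact Finset.sum_congr rfl fun l _ => by ring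
  rw [hfun, integral_finset_sum _
    (fun l hl => ((per_l l (Finset.mem_Icc.mp hl).1 hα hθ hr hs).1).const_mul _),
    Finset.mul_sum]
  refine Finset.sum_congr rfl fun l hl => ?_
  have h := per_l l (Finset.mem_Icc.mp hl).1 hα hθ hr hs
  rw [integral_const_mul, h.2, mul_comm (r ^ 2 / 2),  mul_assoc, ← zfun_half l
    (Finset.mem_Icc.mp hl).1 hα hθ hr]
  ring
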